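/- Let a ∈ [−3/2, −5/4] and r(x) = ax/(1+x). Define A(x) = x + r(x) + (1/r(x))∫_x^0 r(t)dt and B(x) = (1/r(x))∫_{−r(x)}^0 r(s)ds for x ≠ 0, A(0) = B(0) = 0, and D(x) = A(x) if r(x) < −x, D(x) = B(x) if r(x) ≥ −x; let R(x) = (A'(0))² x/(A'(0) − (A''(0)/2)x) with A'(0) = a + 1/2, A''(0) = −(2a+1/3). Then D(x) > R(x) for all x > 0. -/

import Mathlib

open Set Filter Topology

lemma den_pos (t : ℝ) (ht : 0 ≤ t) : (0:ℝ) < 6 + 6*t + t^2 := by nlinarith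

lemma log_lb (x : ℝ) (hx : 0 ≤ x) :
    x*(6+3*x) ≤ Real.log (1+x) * (6+6*x+x^2) := by
  set f : ℝ → ℝ := fun t => Real.log (1+t) - t*(6+3*t)/(6+6*t+t^2) with hf
  have hder : ∀ t : ℝ, 0 ≤ t →
      HasDerivAt f (t^4/((1+t)*(6+6*t+t^2)^2)) t := by
    intro t ht
    have h1t : (0:ℝ) < 1 + t := by linarith
    have hden := den_pos t ht
    have hlog : HasDerivAt (fun u : ℝ => Real.log (1+u)) (1/(1+t)) t := by
      simpa using ((hasDerivAt_id t).const_add 1).log h1t.ne'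
    have hnum : HasDerivAt (fun u : ℝ => u*(6+3*u)) (1*(6+3*t)+t*3) t := by
      have := (hasDerivAt_id t).fun_mul (((hasDerivAt_id t).const_mul 3).const_add 6)
      simpa using this
    have hd2 : HasDerivAt (fun u : ℝ => 6+6*u+u^2) (6+2*t) t := by
      have := (((hasDerivAt_id t).const_mul 6).const_add 6).fun_add (hasDerivAt_pow 2 t)
      simpa using this
    have hrat := hnum.fun_div hd2 hden.ne'
    have := hlog.fun_sub hrat
    refine this.congr_deriv ?_
    field_simp
    ring
  have hcont : ContinuousOn f (Ici 0) := fun t ht => ((hder t ht).continuousAt).continuousWithinAt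
  have hmono : MonotoneOn f (Ici 0) := by
    apply monotoneOn_of_deriv_nonneg (convex_Ici 0) hcont
    · intro t ht
      rw [interior_Ici] at ht
      exact ((hder t (le_of_lt ht)).differentiableAt).differentiableWithinAt
    · intro t ht
      rw [interior_Ici] at ht
      rw [(hder t ht.le).deriv]
      have ht' : (0:ℝ) < t := ht
      have h1t : (0:ℝ) < 1 + t := by linarith
      positivity
  have h0 : f 0 ≤ f x := hmono (self_mem_Ici) hx hx
  have hden := den_pos x hx
  have hf0 : f 0 = 0 := by simp [hf]
  rw [hf0, hf] at h0
  simp only at h0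
  have h2 : x*(6+3*x)/(6+6*x+x^2) ≤ Real.log (1+x) := by linarith
  calc x*(6+3*x) = x*(6+3*x)/(6+6*x+x^2) * (6+6*x+x^2) := by field_simp
    _ ≤ Real.log (1+x) * (6+6*x+x^2) := by
        exact mul_le_mul_of_nonneg_right h2 hden.le

lemma integ (a y : ℝ) (hy : 0 ≤ y) :
    (∫ t in y..(0:ℝ), a * t / (1+t)) = a * (Real.log (1+y) - y) := by
  have key : ∀ t ∈ uIcc y (0:ℝ), HasDerivAt (fun u => a*(u - Real.log (1+u))) (a*t/(1+t)) t := by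
    intro t ht
    rw [uIcc_comm, uIcc_of_le hy] at ht
    have h1t : (0:ℝ) < 1 + t := by linarith [ht.1]
    have hlog : HasDerivAt (fun u : ℝ => Real.log (1+u)) (1/(1+t)) t := by
      simpa using ((hasDerivAt_id t).const_add 1).log h1t.ne'
    have := ((hasDerivAt_id t).fun_sub hlog).const_mul a
    refine this.congr_deriv ?_
    field_simp
    ring
  have hint : IntervalIntegrable (fun t => a * t / (1+t)) MeasureTheory.volume y 0 := by
    apply ContinuousOn.intervalIntegrable
    apply ContinuousOn.div (by fun_prop) (by fun_prop)
    intro t ht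
    rw [uIcc_comm, uIcc_of_le hy] at ht
    have : (0:ℝ) < 1 + t := by linarith [ht.1]
    exact this.ne'
  rw [intervalIntegral.integral_eq_sub_of_hasDerivAt key hint]
  simp
  ring

lemma coreA (a x l : ℝ) (hx : 0 < x) (ha : a ≤ -(5/4))
    (hl : x*(6+3*x) ≤ l*(6+6*x+x^2))
    (hD2 : ((a+1/2)+(a+1/6)*x)*(1+x)^2 ≤ 0) :
    ((x^2*(1+x) + a*x^2 + (1+x)^2*(l-x)) * ((a+1/2)+(a+1/6)*x)
      - (a+1/2)^2*x^2*(1+x)) * (6+6*x+x^2) < 0 := by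
  have h1 : (l*(6+6*x+x^2) - x*(6+3*x)) * (((a+1/2)+(a+1/6)*x)*(1+x)^2) ≤ 0 :=
    mul_nonpos_of_nonneg_of_nonpos (by linarith) hD2
  have h18 : x^4*(1+18*a) < 0 := mul_neg_of_pos_of_neg (by positivity) (by linarith)
  have h14 : x^5*(1+14*a) < 0 := mul_neg_of_pos_of_neg (by positivity) (by linarith)
  nlinarith [h1, h18, h14]

lemma coreB (a x l : ℝ) (hu : 0 ≤ a+1+x) (hv : 0 ≤ -(5/4)-a)
    (hl2 : (-(a*x))*(6*(1+x)-3*a*x) ≤ l*(6*(1+x)^2-6*a*x*(1+x)+a^2*x^2))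
    (hD2 : ((a+1/2)+(a+1/6)*x)*(1+x) ≤ 0) :
    (((1+x)*l + a*x) * ((a+1/2)+(a+1/6)*x) - (a+1/2)^2*x^2)
      * (6*(1+x)^2-6*a*x*(1+x)+a^2*x^2) < 0 := by
  have h1 : (l*(6*(1+x)^2-6*a*x*(1+x)+a^2*x^2) - (-(a*x))*(6*(1+x)-3*a*x))
      * (((a+1/2)+(a+1/6)*x)*(1+x)) ≤ 0 :=
    mul_nonpos_of_nonneg_of_nonpos (by linarith) hD2
  have hS : (0:ℝ) ≤ (305/512)*(-(5/4)-a) + (1647/512)*(-(5/4)-a)^2 + (65/8)*(-(5/4)-a)^3 + (313/32)*(-(5/4)-a)^4 + (11/2)*(-(5/4)-a)^5 + (7/6)*(-(5/4)-a)^6 + (1135/2048)*(a+1+x) + (2997/512)*(a+1+x)*(-(5/4)-a) + (1367/64)*(a+1+x)*(-(5/4)-a)^2 + (513/16)*(a+1+x)*(-(5/4)-a)^3 + (163/8)*(a+1+x)*(-(5/4)-a)^4 + (9/2)*(a+1+x)*(-(5/4)-a)^5 + (957/512)*(a+1+x)^2 + (865/64)*(a+1+x)^2*(-(5/4)-a)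 + (119/4)*(a+1+x)^2*(-(5/4)-a)^2 + (95/4)*(a+1+x)^2*(-(5/4)-a)^3 + (11/2)*(a+1+x)^2*(-(5/4)-a)^4 + (491/384)*(a+1+x)^3 + (241/32)*(a+1+x)^3*(-(5/4)-a) + (71/8)*(a+1+x)^3*(-(5/4)-a)^2 + (13/6)*(a+1+x)^3*(-(5/4)-a)^3 :=
    add_nonneg (add_nonneg (add_nonneg (add_nonneg (add_nonneg (add_nonneg (add_nonneg (add_nonneg (add_nonneg (add_nonneg (add_nonneg (add_nonneg (add_nonneg (add_nonneg (add_nonneg (add_nonneg (add_nonneg (add_nonneg (add_nonneg (add_nonneg (mul_nonneg (by norm_num : (0:ℝ) ≤ (305/512)) hv) (mul_nonneg (by norm_num : (0:ℝ) ≤ (1647/512)) (pow_nonneg hv 2))) (mul_nonneg (by norm_num : (0:ℝ) ≤ (65/8)) (pow_nonneg hv 3))) (mul_nonneg (by norm_num : (0:ℝ) ≤ (313/32)) (pow_nonneg hv 4))) (mul_nonneg (by norm_num : (0:ℝ) ≤ (11/2)) (pow_nonneg hv 5))) (mul_nonneg (by norm_num : (0:ℝ) ≤ (7/6)) (pow_nonneg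 hv 6))) (mul_nonneg (by norm_num : (0:ℝ) ≤ (1135/2048)) hu)) (mul_nonneg (mul_nonneg (by norm_num : (0:ℝ) ≤ (2997/512)) hu) hv)) (mul_nonneg (mul_nonneg (by norm_num : (0:ℝ) ≤ (1367/64)) hu) (pow_nonneg hv 2))) (mul_nonneg (mul_nonneg (by norm_num : (0:ℝ) ≤ (513/16)) hu) (pow_nonneg hv 3))) (mul_nonneg (mul_nonneg (by norm_num : (0:ℝ) ≤ (163/8)) hu) (pow_nonneg hv 4))) (mul_nonneg (mul_nonneg (by norm_num : (0:ℝ) ≤ (9/2)) hu) (pow_nonneg hv 5))) (mul_nonneg (by norm_num : (0:ℝ) ≤ (957/512)) (pow_nonneg hu 2))) (mul_nonneg (mul_nonneg (by norm_num : (0:ℝ) ≤ (865/64)) (pow_nonneg hu 2)) hv)) (mul_nonneg (mul_nonneg (by norm_num : (0:ℝ) ≤ (119/4)) (pow_nonneg hu 2)) (pow_nonneg hv 2))) (mul_nonneg (mul_nonneg (by norm_num : (0:ℝ) ≤ (95/4)) (pow_nonneg hu 2)) (pow_nonneg hv 3))) (mul_nonneg (mul_nonneg (by norm_num : (0:ℝ)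 ≤ (11/2)) (pow_nonneg hu 2)) (pow_nonneg hv 4))) (mul_nonneg (by norm_num : (0:ℝ) ≤ (491/384)) (pow_nonneg hu 3))) (mul_nonneg (mul_nonneg (by norm_num : (0:ℝ) ≤ (241/32)) (pow_nonneg hu 3)) hv)) (mul_nonneg (mul_nonneg (by norm_num : (0:ℝ) ≤ (71/8)) (pow_nonneg hu 3)) (pow_nonneg hv 2))) (mul_nonneg (mul_nonneg (by norm_num : (0:ℝ) ≤ (13/6)) (pow_nonneg hu 3)) (pow_nonneg hv 3))
  nlinarith [h1, hS]


set_option maxHeartbeats 1000000 in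
/-- Corollary 2.7 of [lprtt]: for a ∈ [-3/2, -5/4], with r(x) = ax/(1+x),
A(x) = x + r(x) + (1/r(x))∫ₓ⁰ r(t)dt, B(x) = (1/r(x))∫_{-r(x)}^0 r(s)ds,
D(x) = A(x) if r(x) < -x and D(x) = B(x) if r(x) ≥ -x, and
R(x) = (A'(0))²x/(A'(0) - (A''(0)/2)x) with A'(0) = a + 1/2,
A''(0) = -(2a + 1/3), one has D(x) > R(x) for all x > 0. -/
theorem D_dominates_R (a : ℝ) (ha₁ : -(3 / 2) ≤ a) (ha₂ : a ≤ -(5 / 4))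
    (r A B D R : ℝ → ℝ) (c₁ c₂ : ℝ)
    (hr : ∀ x : ℝ, r x = a * x / (1 + x))
    (hA : ∀ x : ℝ, x ≠ 0 → A x = x + r x + (1 / r x) * ∫ t in x..(0 : ℝ), r t)
    (hA0 : A 0 = 0)
    (hB : ∀ x : ℝ, x ≠ 0 → B x = (1 / r x) * ∫ s in (-(r x))..(0 : ℝ), r s)
    (hB0 : B 0 = 0)
    (hD : ∀ x : ℝ, D x = if r x < -x then A x else B x)
    (hc₁ : c₁ = a + 1 / 2) (hc₂ : c₂ = -(2 * a + 1 / 3))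
    (hR : ∀ x : ℝ, R x = c₁ ^ 2 * x / (c₁ - (c₂ / 2) * x)) :
    ∀ x : ℝ, 0 < x → R x < D x := by
  intro x hx
  have ha : a < 0 := by linarith
  have h1x : (0:ℝ) < 1 + x := by linarith
  have hane : a ≠ 0 := ha.ne
  have hxne : x ≠ 0 := hx.ne'
  have h1xne : (1:ℝ) + x ≠ 0 := h1x.ne'
  have hd : c₁ - c₂ / 2 * x < 0 := by rw [hc₁, hc₂]; nlinarith
  have hd' : (0:ℝ) ≤ -((a+1/2)+(a+1/6)*x) := by nlinarith
  rw [hD x, hR x, div_lt_iff_of_neg hd]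
  split_ifs with hcase
  · -- region A
    rw [hA x hx.ne']
    simp only [hr]
    rw [integ a x hx.le]
    set l := Real.log (1 + x) with hldef
    have hl : x*(6+3*x) ≤ l*(6+6*x+x^2) := log_lb x hx.le
    have heq : (x + a * x / (1 + x) + 1 / (a * x / (1 + x)) * (a * (l - x))) * (c₁ - c₂ / 2 * x)
        - c₁ ^ 2 * x
        = ((x^2*(1+x) + a*x^2 + (1+x)^2*(l-x)) * ((a+1/2)+(a+1/6)*x)
            - (a+1/2)^2*x^2*(1+x)) / (x*(1+x)) := by
      rw [hc₁, hc₂]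
      field_simp
      ring
    have hD2 : ((a+1/2)+(a+1/6)*x)*(1+x)^2 ≤ 0 :=
      mul_nonpos_of_nonpos_of_nonneg (by linarith) (sq_nonneg _)
    have hMden := coreA a x l hx ha₂ hl hD2
    have hM : (x^2*(1+x) + a*x^2 + (1+x)^2*(l-x)) * ((a+1/2)+(a+1/6)*x)
        - (a+1/2)^2*x^2*(1+x) < 0 := by
      by_contra h
      push_neg at h
      linarith only [hMden, mul_nonneg h (den_pos x hx.le).le]
    have hpos : (0:ℝ) < x*(1+x) := by positivity
    have hq := div_neg_of_neg_of_pos hM hpos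
    linarith [heq, hq]
  · -- region B
    push_neg at hcase
    have hcase' : -x ≤ a * x / (1+x) := by rw [← hr x]; exact hcase
    rw [hB x hx.ne']
    simp only [hr]
    have hrx : a * x / (1+x) < 0 := div_neg_of_neg_of_pos (by nlinarith) h1x
    have hyge : (0:ℝ) ≤ -(a * x / (1 + x)) := by linarith
    rw [integ a _ hyge]
    set s := -(a * x / (1 + x)) with hsdef
    set l := Real.log (1 + s) with hldef
    have hl : s*(6+3*s) ≤ l*(6+6*s+s^2) := log_lb s hyge
    have hax : 0 ≤ a + 1 + x := by
      have h2 : -x * (1+x) ≤ a * x := by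
        have h3 := mul_le_mul_of_nonneg_right hcase' h1x.le
        calc -x*(1+x) ≤ a*x/(1+x)*(1+x) := h3
          _ = a*x := by field_simp
      nlinarith
    have hs_id : (s*(6+3*s))*(1+x)^2 = (-(a*x))*(6*(1+x)-3*a*x) := by
      rw [hsdef]; field_simp; ring
    have hQl : l*((6+6*s+s^2)*(1+x)^2) = l*(6*(1+x)^2-6*a*x*(1+x)+a^2*x^2) := by
      congr 1
      rw [hsdef]; field_simp; ring
    have hl2 : (-(a*x))*(6*(1+x)-3*a*x) ≤ l*(6*(1+x)^2-6*a*x*(1+x)+a^2*x^2) := by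
      have h := mul_le_mul_of_nonneg_right hl (sq_nonneg (1+x))
      nlinarith [h, hs_id, hQl]
    have heq : 1 / (a * x / (1 + x)) * (a * (l - -(a * x / (1 + x)))) * (c₁ - c₂ / 2 * x)
        - c₁ ^ 2 * x
        = (((1+x)*l + a*x) * ((a+1/2)+(a+1/6)*x) - (a+1/2)^2*x^2) / x := by
      rw [hc₁, hc₂]
      field_simp
      ring
    have hQpos : (0:ℝ) < 6*(1+x)^2-6*a*x*(1+x)+a^2*x^2 := by nlinarith [sq_nonneg (a*x)]
    have hD2 : ((a+1/2)+(a+1/6)*x)*(1+x) ≤ 0 :=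
      mul_nonpos_of_nonpos_of_nonneg (by linarith) h1x.le
    have hMQ := coreB a x l hax (by linarith) hl2 hD2
    have hM : ((1+x)*l + a*x) * ((a+1/2)+(a+1/6)*x) - (a+1/2)^2*x^2 < 0 := by
      by_contra h
      push_neg at h
      linarith only [hMQ, mul_nonneg h hQpos.le]
    have hq := div_neg_of_neg_of_pos hM hx
    linarith [heq, hq]
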